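/- Let κ be an uncountable regular cardinal, X a module, and M a module admitting a κ-filtration ⟨M_α | α < κ⟩ with M_{α+1} ∈ Add(X) for each α < κ. Then M is (κ, Add(X))-free in the weak sense: there is a directed system S of submodules of M, all belonging to Add(X), such that every subset of M of cardinality < κ is contained in a member of S. -/

import Mathlib

/-- `N` belongs to `Add(X)`: it is isomorphic to a direct summand of a direct sum of
copies of `X`. -/
def InAdd (R : Type u) [Ring R] (X : Type u) [AddCommGroup X] [Module R X]
    (N : Type u) [AddCommGroup N] [Module R N] : Prop :=
  ∃ (ι : Type u) (f : N →ₗ[R] (ι →₀ X)) (g : (ι →₀ X) →ₗ[R] N),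
    g.comp f = LinearMap.id

/-- If `M` admits a `κ`-filtration whose successor members belong to `Add(X)`, then `M`
is `(κ, Add(X))`-free in the weak sense. -/
theorem stmt5
    {R : Type u} [Ring R] {M : Type u} [AddCommGroup M] [Module R M]
    (X : Type u) [AddCommGroup X] [Module R X]
    (κ : Cardinal.{u}) (hκ : κ.IsRegular) (hunc : ℵ₀ < κ)
    (Mfil : Ordinal.{u} → Submodule R M)
    (hmono : ∀ α β : Ordinal.{u}, α ≤ β → β < κ.ord → Mfil α ≤ Mfil β)
    (hlim : ∀ α : Ordinal.{u}, α < κ.ord → Order.IsSuccLimit α → Mfil α = ⨆ β < α, Mfil β)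
    (hunion : ⨆ α : Set.Iio κ.ord, Mfil α.1 = ⊤)
    (hgen : ∀ α < κ.ord, ∃ S : Set M, Cardinal.mk S < κ ∧ Submodule.span R S = Mfil α)
    (hadd : ∀ α < κ.ord, InAdd R X (Mfil (α + 1))) :
    ∃ 𝒮 : Set (Submodule R M), DirectedOn (· ≤ ·) 𝒮 ∧
      (∀ P ∈ 𝒮, InAdd R X P) ∧
      (∀ Y : Set M, Cardinal.mk Y < κ → ∃ P ∈ 𝒮, Y ⊆ (P : Set M)) := by
  have hord : Order.IsSuccLimit κ.ord := Cardinal.isSuccLimit_ord hκ.aleph0_le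
  have hsucc : ∀ α < κ.ord, α + 1 < κ.ord := fun α h => by rw [Ordinal.add_one_eq_succ]; exact hord.succ_lt h
  refine ⟨{P | ∃ α < κ.ord, P = Mfil (α + 1)}, ?_, ?_, ?_⟩
  · rintro P ⟨α, hα, rfl⟩ Q ⟨β, hβ, rfl⟩
    rcases le_total α β with h | h
    · exact ⟨Mfil (β + 1), ⟨β, hβ, rfl⟩,
        hmono _ _ (by simpa using h) (hsucc _ hβ), le_rfl⟩
    · exact ⟨Mfil (α + 1), ⟨α, hα, rfl⟩, le_rfl,
        hmono _ _ (by simpa using h) (hsucc _ hα)⟩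
  · rintro P ⟨α, hα, rfl⟩
    exact hadd α hα
  · intro Y hY
    have hne : Nonempty (Set.Iio κ.ord) := ⟨⟨0, hord.pos⟩⟩
    have hdir : Directed (· ≤ ·) (fun α : Set.Iio κ.ord => Mfil α.1) := by
      rintro ⟨α, hα⟩ ⟨β, hβ⟩
      rcases le_total α β with h | h
      · exact ⟨⟨β, hβ⟩, hmono _ _ h hβ, le_rfl⟩
      · exact ⟨⟨α, hα⟩, le_rfl, hmono _ _ h hα⟩
    have hmem : ∀ y : Y, ∃ α : Set.Iio κ.ord, (y : M) ∈ Mfil α.1 := by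
      intro y
      have : (y : M) ∈ ⨆ α : Set.Iio κ.ord, Mfil α.1 := hunion ▸ Submodule.mem_top
      exact (Submodule.mem_iSup_of_directed _ hdir).1 this
    choose f hf using hmem
    set γ := ⨆ y : Y, (f y).1 with hγ
    have hγlt : γ < κ.ord := by
      exact Cardinal.iSup_lt_ord_lift_of_isRegular hκ (by rwa [Cardinal.lift_id]) fun y => (f y).2
    refine ⟨Mfil (γ + 1), ⟨γ, hγlt, rfl⟩, ?_⟩
    intro y hy
    have h1 : (f ⟨y, hy⟩).1 ≤ γ := Ordinal.le_iSup (fun y : Y => (f y).1) ⟨y, hy⟩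
    exact hmono _ _ (h1.trans (le_self_add (a := γ) (b := 1))) (hsucc _ hγlt)
      (hf ⟨y, hy⟩)
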